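/- Let ρ ≥ 1. Then lim_{N→∞} E(H_N)/N = 1. -/

import Mathlib

open Finset Filter Real Topology

/-- `r_{ρ,n}(i) = ρ^{-i} * C(n-1, i)^{-1}`. -/
noncomputable def rfun (ρ : ℝ) (n i : ℕ) : ℝ := (ρ ^ i * (Nat.choose (n - 1) i : ℝ))⁻¹

/-- `P(H_N ≥ k)` for `k = 1,…,N`, and `0` for `k > N`. -/
noncomputable def tailP (ρ : ℝ) (N k : ℕ) : ℝ :=
  if k ≤ N then (∑ i ∈ Finset.range k, rfun ρ N i)⁻¹ else 0

/-- `P(H_N = k) = P(H_N ≥ k) − P(H_N ≥ k+1)`. -/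
noncomputable def pmfP (ρ : ℝ) (N k : ℕ) : ℝ := tailP ρ N k - tailP ρ N (k + 1)

/-- `E(H_N) = ∑_{k=1}^N P(H_N ≥ k)`. -/
noncomputable def EH (ρ : ℝ) (N : ℕ) : ℝ := ∑ k ∈ Finset.Icc 1 N, tailP ρ N k

/-- `Var(H_N) = ∑_{k=1}^N (k − E(H_N))² P(H_N = k)`. -/
noncomputable def VarH (ρ : ℝ) (N : ℕ) : ℝ :=
  ∑ k ∈ Finset.Icc 1 N, ((k : ℝ) - EH ρ N) ^ 2 * pmfP ρ N k

/-- `P(H_N ≤ t)` for a real threshold `t`. -/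
noncomputable def cdfP (ρ : ℝ) (N : ℕ) (t : ℝ) : ℝ :=
  ∑ k ∈ (Finset.Icc 1 N).filter (fun k : ℕ => (k : ℝ) ≤ t), pmfP ρ N k

lemma choose_mono_half {m a b : ℕ} (hab : a ≤ b) (hb : b ≤ m / 2) :
    m.choose a ≤ m.choose b := by
  induction b with
  | zero => simp [Nat.le_zero.mp hab]
  | succ n ih =>
    rcases Nat.lt_or_ge a (n + 1) with h | h
    · exact le_trans (ih (Nat.lt_succ_iff.mp h) (le_trans (Nat.le_succ n) hb))
        (Nat.choose_le_succ_of_lt_half_left (Nat.lt_of_lt_of_le (Nat.lt_succ_self n) hb))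
    · have : a = n + 1 := le_antisymm hab h
      subst this; exact le_refl _

lemma choose_two_le {m i : ℕ} (h2 : 2 ≤ i) (hi : i ≤ m - 2) : m.choose 2 ≤ m.choose i := by
  have hm : 4 ≤ m := by omega
  rcases le_or_gt i (m / 2) with h | h
  · exact choose_mono_half h2 h
  · have him : i ≤ m := by omega
    have hsym : m.choose (m - i) = m.choose i := Nat.choose_symm him
    rw [← hsym]
    exact choose_mono_half (by omega) (by omega)

lemma key_sum {m : ℕ} (hm : 3 ≤ m) :
    ∑ i ∈ Icc 1 (m - 1), ((m.choose i : ℝ))⁻¹ ≤ 4 / ((m : ℝ) - 1) := by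
  have hx : (3:ℝ) ≤ (m:ℝ) := by exact_mod_cast hm
  have hx1 : (0:ℝ) < (m:ℝ) - 1 := by linarith
  have hx0 : (0:ℝ) < (m:ℝ) := by linarith
  have hsplit : Icc 1 (m - 1) = insert 1 (insert (m - 1) (Icc 2 (m - 2))) := by
    ext i; simp only [mem_Icc, mem_insert]; omega
  rw [hsplit, sum_insert (by simp only [mem_insert, mem_Icc]; omega),
    sum_insert (by simp only [mem_Icc]; omega)]
  have h1 : ((m.choose 1 : ℕ) : ℝ)⁻¹ ≤ 1 / ((m:ℝ) - 1) := by
    rw [Nat.choose_one_right, inv_eq_one_div]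
    exact div_le_div_of_nonneg_left one_pos.le hx1 (by linarith)
  have h2 : ((m.choose (m - 1) : ℕ) : ℝ)⁻¹ ≤ 1 / ((m:ℝ) - 1) := by
    have : m.choose (m - 1) = m := by
      rw [show m - 1 = m - 1 from rfl, Nat.choose_symm (by omega), Nat.choose_one_right]
    rw [this, inv_eq_one_div]
    exact div_le_div_of_nonneg_left one_pos.le hx1 (by linarith)
  have hc2 : (0:ℝ) < (m.choose 2 : ℝ) := by
    exact_mod_cast Nat.choose_pos (by omega)
  have h3 : ∑ i ∈ Icc 2 (m - 2), ((m.choose i : ℝ))⁻¹ ≤ 2 / ((m:ℝ) - 1) := by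
    calc ∑ i ∈ Icc 2 (m - 2), ((m.choose i : ℝ))⁻¹
        ≤ (Icc 2 (m - 2)).card • ((m.choose 2 : ℝ))⁻¹ := by
          apply Finset.sum_le_card_nsmul
          intro i hi
          simp only [mem_Icc] at hi
          exact inv_anti₀ hc2 (by exact_mod_cast choose_two_le hi.1 hi.2)
      _ ≤ 2 / ((m:ℝ) - 1) := by
          rw [nsmul_eq_mul, Nat.card_Icc, Nat.cast_choose_two]
          have hcard : ((m - 2 + 1 - 2 : ℕ) : ℝ) ≤ (m:ℝ) := by
            have : (m - 2 + 1 - 2 : ℕ) ≤ m := by omega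
            exact_mod_cast this
          rw [inv_eq_one_div, mul_one_div, div_le_div_iff₀ (by positivity) hx1]
          nlinarith [mul_le_mul_of_nonneg_right hcard hx1.le]
  have hsum : 1/((m:ℝ)-1) + 1/((m:ℝ)-1) + 2/((m:ℝ)-1) = 4/((m:ℝ)-1) := by ring
  linarith

lemma rfun_nonneg {ρ : ℝ} (hρ : 0 ≤ ρ) (n i : ℕ) : 0 ≤ rfun ρ n i := by
  unfold rfun; positivity

lemma rfun_zero (ρ : ℝ) (n : ℕ) : rfun ρ n 0 = 1 := by simp [rfun]

lemma one_le_sum {ρ : ℝ} (hρ : 1 ≤ ρ) (N : ℕ) {k : ℕ} (hk : 1 ≤ k) :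
    (1:ℝ) ≤ ∑ i ∈ Finset.range k, rfun ρ N i := by
  have h0 : (0:ℕ) ∈ Finset.range k := Finset.mem_range.mpr hk
  calc (1:ℝ) = rfun ρ N 0 := (rfun_zero ρ N).symm
    _ ≤ ∑ i ∈ Finset.range k, rfun ρ N i :=
        Finset.single_le_sum (fun i _ => rfun_nonneg (le_trans zero_le_one hρ) N i) h0

lemma tailP_nonneg {ρ : ℝ} (hρ : 1 ≤ ρ) (N k : ℕ) : 0 ≤ tailP ρ N k := by
  unfold tailP
  split
  · exact inv_nonneg.mpr (Finset.sum_nonneg fun i _ => rfun_nonneg (le_trans zero_le_one hρ) N i)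
  · exact le_refl 0

lemma tailP_le_one {ρ : ℝ} (hρ : 1 ≤ ρ) (N : ℕ) {k : ℕ} (hk : 1 ≤ k) : tailP ρ N k ≤ 1 := by
  unfold tailP
  split
  · exact inv_le_one_of_one_le₀ (one_le_sum hρ N hk)
  · norm_num

lemma EH_le {ρ : ℝ} (hρ : 1 ≤ ρ) (N : ℕ) : EH ρ N ≤ N := by
  unfold EH
  calc ∑ k ∈ Finset.Icc 1 N, tailP ρ N k ≤ (Finset.Icc 1 N).card • (1:ℝ) := by
        apply Finset.sum_le_card_nsmul
        intro k hk
        exact tailP_le_one hρ N (Finset.mem_Icc.mp hk).1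
    _ = N := by simp [Nat.card_Icc]

lemma tailP_lower {ρ : ℝ} (hρ : 1 ≤ ρ) {N k : ℕ} (hN : 4 ≤ N) (hk1 : 1 ≤ k)
    (hk : k ≤ N - 1) : (1 + 4/((N:ℝ)-2))⁻¹ ≤ tailP ρ N k := by
  have hkN : k ≤ N := by omega
  rw [tailP, if_pos hkN]
  have hm : 3 ≤ N - 1 := by omega
  have hρ0 : (0:ℝ) ≤ ρ := le_trans zero_le_one hρ
  have hsum_le : ∑ i ∈ Finset.range k, rfun ρ N i ≤ ∑ i ∈ Finset.range (N-1), rfun ρ N i :=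
    Finset.sum_le_sum_of_subset_of_nonneg (Finset.range_subset_range.mpr hk)
      (fun i _ _ => rfun_nonneg hρ0 N i)
  have hdecomp : Finset.range (N-1) = insert 0 (Finset.Icc 1 (N-1-1)) := by
    ext i; simp only [Finset.mem_range, Finset.mem_insert, Finset.mem_Icc]; omega
  have hdec : ∑ i ∈ Finset.range (N-1), rfun ρ N i
      = 1 + ∑ i ∈ Finset.Icc 1 (N-1-1), rfun ρ N i := by
    rw [hdecomp, Finset.sum_insert (by simp), rfun_zero]
  have hterm : ∀ i ∈ Finset.Icc 1 (N-1-1), rfun ρ N i ≤ (((N-1).choose i : ℕ):ℝ)⁻¹ := by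
    intro i hi
    simp only [Finset.mem_Icc] at hi
    rw [rfun]
    have hcpos : (0:ℝ) < (((N-1).choose i : ℕ):ℝ) := by
      exact_mod_cast Nat.choose_pos (by omega : i ≤ N - 1)
    exact inv_anti₀ hcpos (le_mul_of_one_le_left hcpos.le (one_le_pow₀ hρ))
  have hmid : ∑ i ∈ Finset.Icc 1 (N-1-1), rfun ρ N i ≤ 4/(((N-1:ℕ):ℝ) - 1) :=
    le_trans (Finset.sum_le_sum hterm) (key_sum hm)
  have hcast : ((N-1:ℕ):ℝ) = (N:ℝ) - 1 := by
    rw [Nat.cast_sub (by omega)]; norm_num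
  rw [hcast] at hmid
  have hmid' : ∑ i ∈ Finset.Icc 1 (N-1-1), rfun ρ N i ≤ 4/((N:ℝ) - 2) := by
    have : (N:ℝ) - 1 - 1 = (N:ℝ) - 2 := by ring
    rwa [this] at hmid
  have hpos : (0:ℝ) < ∑ i ∈ Finset.range k, rfun ρ N i :=
    lt_of_lt_of_le one_pos (one_le_sum hρ N hk1)
  exact inv_anti₀ hpos (by linarith)

lemma EH_lower {ρ : ℝ} (hρ : 1 ≤ ρ) {N : ℕ} (hN : 4 ≤ N) :
    ((N:ℝ)-1) * (1 + 4/((N:ℝ)-2))⁻¹ ≤ EH ρ N := by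
  have hsub : ∑ k ∈ Finset.Icc 1 (N-1), tailP ρ N k ≤ EH ρ N := by
    apply Finset.sum_le_sum_of_subset_of_nonneg (Finset.Icc_subset_Icc_right (by omega))
    exact fun k _ _ => tailP_nonneg hρ N k
  have hlow : (Finset.Icc 1 (N-1)).card • ((1 + 4/((N:ℝ)-2))⁻¹)
      ≤ ∑ k ∈ Finset.Icc 1 (N-1), tailP ρ N k := by
    apply Finset.card_nsmul_le_sum
    intro k hk
    exact tailP_lower hρ hN (Finset.mem_Icc.mp hk).1 (Finset.mem_Icc.mp hk).2
  have hcard : ((Finset.Icc 1 (N-1)).card : ℝ) = (N:ℝ) - 1 := by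
    rw [Nat.card_Icc]
    rw [show N - 1 + 1 - 1 = N - 1 from rfl, Nat.cast_sub (by omega)]
    norm_num
  rw [nsmul_eq_mul, hcard] at hlow
  linarith

theorem mean_height_asymptotics_rho_ge_one (ρ : ℝ) (hρ : 1 ≤ ρ) :
    Tendsto (fun N : ℕ => EH ρ N / N) atTop (𝓝 1) := by
  have h2 : Tendsto (fun N : ℕ => (N:ℝ) - 2) atTop atTop := by
    simpa [sub_eq_add_neg] using
      tendsto_atTop_add_const_right atTop (-2 : ℝ) tendsto_natCast_atTop_atTop
  have hδ : Tendsto (fun N : ℕ => 4/((N:ℝ)-2)) atTop (𝓝 0) :=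
    Tendsto.div_atTop tendsto_const_nhds h2
  have hinv : Tendsto (fun N : ℕ => (1 + 4/((N:ℝ)-2))⁻¹) atTop (𝓝 1) := by
    have := (tendsto_const_nhds.add hδ).inv₀ (by norm_num : (1:ℝ) + 0 ≠ 0)
    simpa using this
  have hfrac : Tendsto (fun N : ℕ => ((N:ℝ)-1)/(N:ℝ)) atTop (𝓝 1) := by
    have h1 : Tendsto (fun N : ℕ => 1 - 1/(N:ℝ)) atTop (𝓝 1) := by
      simpa using tendsto_const_nhds.sub (tendsto_one_div_atTop_nhds_zero_nat (𝕜 := ℝ))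
    apply h1.congr'
    filter_upwards [eventually_ge_atTop 1] with N hN
    have hN0 : (N:ℝ) ≠ 0 := by positivity
    field_simp
  have hL : Tendsto (fun N : ℕ => (((N:ℝ)-1)/(N:ℝ)) * (1 + 4/((N:ℝ)-2))⁻¹) atTop (𝓝 1) := by
    simpa using hfrac.mul hinv
  apply tendsto_of_tendsto_of_tendsto_of_le_of_le' hL tendsto_const_nhds
  · filter_upwards [eventually_ge_atTop 4] with N hN
    have hN0 : (0:ℝ) < (N:ℝ) := by positivity
    rw [div_mul_eq_mul_div]
    exact (div_le_div_iff_of_pos_right hN0).mpr (EH_lower hρ hN)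
  · filter_upwards [eventually_ge_atTop 1] with N hN
    have hN0 : (0:ℝ) < (N:ℝ) := by positivity
    exact (div_le_one hN0).mpr (EH_le hρ N)
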